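/- Let n, m ≥ 0 be integers and let k be a natural number with k ≥ n + m and k − n − m even. Then g_k(n,m) = λ^{−k} · Σ_{l=0}^{(k−n−m)/2} α₁^{n+2l} · k! / ( l! · (n+l)! · ((k−n−2l−m)/2)! · ((k−n−2l+m)/2)! ). -/

import Mathlib

open MeasureTheory Real Complex Finset


lemma intA (t : ℤ) : (∫ ξ : ℝ in Set.Icc (-Real.pi) Real.pi, Complex.exp (Complex.I * t * ξ))
    = if t = 0 then ((2 * Real.pi : ℝ) : ℂ) else 0 := by
  rw [integral_Icc_eq_integral_Ioc, ← intervalIntegral.integral_of_le (by linarith [Real.pi_pos] : -Real.pi ≤ Real.pi)]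
  by_cases h : t = 0
  · simp [h]
    push_cast
    ring
  · have hc : (Complex.I * t) ≠ 0 := by simp [Complex.I_ne_zero, h]
    rw [if_neg h, integral_exp_mul_complex hc]
    have e1 : Complex.exp (Complex.I * t * ((Real.pi : ℝ) : ℂ)) = ((-1:ℂ)) ^ t := by
      rw [show Complex.I * t * ((Real.pi : ℝ) : ℂ) = (t : ℂ) * ((Real.pi : ℂ) * Complex.I) by push_cast; ring,
        Complex.exp_int_mul, Complex.exp_pi_mul_I]
    have e2 : Complex.exp (Complex.I * t * ((-Real.pi : ℝ) : ℂ)) = ((-1:ℂ)) ^ t := by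
      rw [show Complex.I * t * ((-Real.pi : ℝ) : ℂ) = ((-t : ℤ) : ℂ) * ((Real.pi : ℂ) * Complex.I) by push_cast; ring,
        Complex.exp_int_mul, Complex.exp_pi_mul_I, zpow_neg, ← inv_zpow, inv_neg, inv_one]
    rw [e1, e2, sub_self, zero_div]

lemma intB (n j : ℕ) :
    (∫ ξ : ℝ in Set.Icc (-Real.pi) Real.pi,
      Complex.exp (-Complex.I * n * ξ) * ((2 * Real.cos ξ : ℝ) : ℂ) ^ j)
    = if n ≤ j ∧ (j + n) % 2 = 0 then ((2 * Real.pi : ℝ) : ℂ) * (j.choose ((j + n) / 2)) else 0 := by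
  have hpt : ∀ ξ : ℝ, Complex.exp (-Complex.I * n * ξ) * ((2 * Real.cos ξ : ℝ) : ℂ) ^ j
      = ∑ a ∈ range (j + 1), (j.choose a : ℂ) * Complex.exp (Complex.I * ((2 * a - j - n : ℤ)) * ξ) := by
    intro ξ
    have hcos : ((2 * Real.cos ξ : ℝ) : ℂ) = Complex.exp (ξ * Complex.I) + Complex.exp (-ξ * Complex.I) := by
      push_cast
      rw [show Complex.cos ξ = (Complex.exp (ξ * Complex.I) + Complex.exp (-ξ * Complex.I)) / 2 from rfl]
      ring
    rw [hcos, add_pow, Finset.mul_sum]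
    refine Finset.sum_congr rfl fun a ha => ?_
    have haj : a ≤ j := by simpa using Nat.lt_succ_iff.mp (Finset.mem_range.mp ha)
    rw [← Complex.exp_nat_mul, ← Complex.exp_nat_mul]
    rw [show Complex.I * ((2 * (a:ℤ) - j - n : ℤ) : ℂ) * ξ
        = (-Complex.I * n * ξ) + ((a : ℂ) * (ξ * Complex.I) + ((j - a : ℕ) : ℂ) * (-ξ * Complex.I)) by
      push_cast [Nat.cast_sub haj]; ring, Complex.exp_add, Complex.exp_add]
    ring
  rw [setIntegral_congr_fun measurableSet_Icc (fun ξ _ => hpt ξ)]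
  rw [integral_finset_sum _ (fun a _ => Continuous.integrableOn_Icc (by fun_prop))]
  simp_rw [integral_const_mul, intA]
  by_cases h : n ≤ j ∧ (j + n) % 2 = 0
  · obtain ⟨h1, h2⟩ := h
    rw [if_pos ⟨h1, h2⟩]
    rw [Finset.sum_eq_single ((j + n) / 2)]
    · rw [if_pos (by omega)]; ring
    · intro b hb hne
      rw [if_neg (by omega), mul_zero]
    · intro hb
      exact absurd (Finset.mem_range.mpr (by omega)) hb
  · rw [if_neg h]
    refine Finset.sum_eq_zero fun a ha => ?_
    have := Finset.mem_range.mp ha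
    rw [if_neg (by omega), mul_zero]

lemma chooseProd (n m q l : ℕ) (hl : l ≤ q) :
    (((n+m+2*q).choose (n+2*l) : ℝ)) * (((n+2*l).choose (n+l) : ℝ)) * (((m+2*(q-l)).choose (m+(q-l)) : ℝ))
      = ((n+m+2*q).factorial : ℝ) /
        ((l.factorial : ℝ) * ((n+l).factorial : ℝ) * ((q-l).factorial : ℝ) * ((q-l+m).factorial : ℝ)) := by
  obtain ⟨r, rfl⟩ : ∃ r, q = l + r := ⟨q - l, by omega⟩
  simp only [show l + r - l = r from by omega]
  rw [Nat.cast_choose ℝ (show n+2*l ≤ n+m+2*(l+r) by omega),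
      Nat.cast_choose ℝ (show n+l ≤ n+2*l by omega),
      Nat.cast_choose ℝ (show m+r ≤ m+2*r by omega),
      show n+m+2*(l+r) - (n+2*l) = m+2*r from by omega,
      show n+2*l - (n+l) = l from by omega,
      show m+2*r - (m+r) = r from by omega,
      show r + m = m + r from by omega]
  have h1 : ((n+2*l).factorial : ℝ) ≠ 0 := Nat.cast_ne_zero.mpr (Nat.factorial_ne_zero _)
  have h2 : ((m+2*r).factorial : ℝ) ≠ 0 := Nat.cast_ne_zero.mpr (Nat.factorial_ne_zero _)
  have h3 : ((n+l).factorial : ℝ) ≠ 0 := Nat.cast_ne_zero.mpr (Nat.factorial_ne_zero _)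
  have h4 : (l.factorial : ℝ) ≠ 0 := Nat.cast_ne_zero.mpr (Nat.factorial_ne_zero _)
  have h5 : ((m+r).factorial : ℝ) ≠ 0 := Nat.cast_ne_zero.mpr (Nat.factorial_ne_zero _)
  have h6 : (r.factorial : ℝ) ≠ 0 := Nat.cast_ne_zero.mpr (Nat.factorial_ne_zero _)
  field_simp

lemma reindex (n m k q : ℕ) (hk : k = n + m + 2*q) (G : ℕ → ℂ)
    (hG : ∀ j, ¬(n ≤ j ∧ (j+n) % 2 = 0 ∧ m ≤ k - j ∧ (k-j+m) % 2 = 0) → G j = 0) :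
    ∑ j ∈ range (k+1), G j = ∑ l ∈ range (q+1), G (n+2*l) := by
  rw [← Finset.sum_image (g := fun l => n + 2*l) (f := G) (fun x _ y _ h => by dsimp only at h; omega)]
  refine (Finset.sum_subset ?_ ?_).symm
  · intro j hj
    obtain ⟨l, hl, rfl⟩ := Finset.mem_image.mp hj
    have := Finset.mem_range.mp hl
    exact Finset.mem_range.mpr (by omega)
  · intro j hj hnot
    refine hG j fun ⟨h1, h2, h3, h4⟩ => hnot ?_
    have hjk := Finset.mem_range.mp hj
    exact Finset.mem_image.mpr ⟨(j-n)/2, Finset.mem_range.mpr (by omega), by omega⟩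


/-- The coefficients `g_k(n,m)` of the series expansion of the LGF. -/
noncomputable def g (α₁ : ℝ) (k : ℕ) (n m : ℤ) : ℂ :=
  (1 / (4 * Real.pi ^ 2) : ℂ) *
    ∫ ξ : ℝ × ℝ in Set.Icc (-Real.pi) Real.pi ×ˢ Set.Icc (-Real.pi) Real.pi,
      Complex.exp (-Complex.I * ((n : ℂ) * (ξ.1 : ℂ) + (m : ℂ) * (ξ.2 : ℂ))) *
        (((2 * α₁ * Real.cos ξ.1 + 2 * Real.cos ξ.2) / (2 + 2 * α₁) : ℝ) : ℂ) ^ k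

/-- Closed form of `g_k(n,m)` in terms of multinomial coefficients, for `n, m ≥ 0`,
`k ≥ n + m` and `k − n − m` even (written as `k = n + m + 2q`); the summation index
`l` runs from `0` to `q = (k−n−m)/2`, and `(k−n−2l−m)/2 = q − l`,
`(k−n−2l+m)/2 = q − l + m`. -/
theorem stmt5 (α₁ c : ℝ) (hα₀ : 0 < α₁) (hα₁ : α₁ ≤ 1) (hc : 0 < c)
    (n m k q : ℕ) (hk : k = n + m + 2 * q) :
    g α₁ k (n : ℤ) (m : ℤ) =
      ((((2 + 2 * α₁ : ℝ) ^ k)⁻¹ *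
        ∑ l ∈ Finset.range (q + 1),
          α₁ ^ (n + 2 * l) * (Nat.factorial k : ℝ) /
            ((Nat.factorial l : ℝ) * (Nat.factorial (n + l) : ℝ) *
              (Nat.factorial (q - l) : ℝ) * (Nat.factorial (q - l + m) : ℝ)) : ℝ) : ℂ) := by
  have hπ : (Real.pi : ℝ) ≠ 0 := Real.pi_ne_zero
  have hL : (0:ℝ) < 2 + 2 * α₁ := by linarith
  have hpt : ∀ ξ : ℝ × ℝ,
      Complex.exp (-Complex.I * (((n : ℤ) : ℂ) * (ξ.1 : ℂ) + ((m : ℤ) : ℂ) * (ξ.2 : ℂ))) *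
        (((2 * α₁ * Real.cos ξ.1 + 2 * Real.cos ξ.2) / (2 + 2 * α₁) : ℝ) : ℂ) ^ k
      = ((((2 + 2 * α₁ : ℝ) ^ k)⁻¹ : ℝ) : ℂ) * ∑ j ∈ Finset.range (k + 1),
          ((k.choose j : ℂ) * (α₁ : ℂ) ^ j) *
            ((Complex.exp (-Complex.I * (n:ℕ) * ξ.1) * ((2 * Real.cos ξ.1 : ℝ) : ℂ) ^ j) *
             (Complex.exp (-Complex.I * (m:ℕ) * ξ.2) * ((2 * Real.cos ξ.2 : ℝ) : ℂ) ^ (k - j))) := by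
    intro ξ
    rw [show (-Complex.I * (((n : ℤ) : ℂ) * (ξ.1 : ℂ) + ((m : ℤ) : ℂ) * (ξ.2 : ℂ)))
        = (-Complex.I * (n:ℕ) * ξ.1) + (-Complex.I * (m:ℕ) * ξ.2) by push_cast; ring,
      Complex.exp_add]
    push_cast
    rw [div_pow, add_pow]
    simp only [Finset.sum_div, Finset.mul_sum]
    refine Finset.sum_congr rfl fun j hj => ?_
    ring
  unfold g
  rw [MeasureTheory.Measure.volume_eq_prod,
    setIntegral_congr_fun (measurableSet_Icc.prod measurableSet_Icc) (fun ξ _ => hpt ξ),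
    integral_const_mul,
    integral_finset_sum _ (fun j _ => ContinuousOn.integrableOn_compact
      (isCompact_Icc.prod isCompact_Icc) (Continuous.continuousOn (by fun_prop)))]
  simp_rw [integral_const_mul]
  have hprod : ∀ j : ℕ,
      (∫ a : ℝ × ℝ in Set.Icc (-Real.pi) Real.pi ×ˢ Set.Icc (-Real.pi) Real.pi,
        Complex.exp (-Complex.I * (n:ℕ) * a.1) * ((2 * Real.cos a.1 : ℝ) : ℂ) ^ j *
          (Complex.exp (-Complex.I * (m:ℕ) * a.2) * ((2 * Real.cos a.2 : ℝ) : ℂ) ^ (k - j))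
        ∂(MeasureTheory.volume.prod MeasureTheory.volume))
      = (∫ x : ℝ in Set.Icc (-Real.pi) Real.pi,
          Complex.exp (-Complex.I * (n:ℕ) * x) * ((2 * Real.cos x : ℝ) : ℂ) ^ j) *
        (∫ y : ℝ in Set.Icc (-Real.pi) Real.pi,
          Complex.exp (-Complex.I * (m:ℕ) * y) * ((2 * Real.cos y : ℝ) : ℂ) ^ (k - j)) :=
    fun j => setIntegral_prod_mul
      (fun x : ℝ => Complex.exp (-Complex.I * (n:ℕ) * x) * ((2 * Real.cos x : ℝ) : ℂ) ^ j)
      (fun y : ℝ => Complex.exp (-Complex.I * (m:ℕ) * y) * ((2 * Real.cos y : ℝ) : ℂ) ^ (k - j)) _ _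
  simp_rw [hprod, intB]
  rw [reindex n m k q hk
    (fun x => (k.choose x : ℂ) * (α₁ : ℂ) ^ x *
      ((if n ≤ x ∧ (x + n) % 2 = 0 then ((2 * Real.pi : ℝ) : ℂ) * (x.choose ((x + n) / 2) : ℂ) else 0) *
        if m ≤ k - x ∧ (k - x + m) % 2 = 0 then ((2 * Real.pi : ℝ) : ℂ) * ((k - x).choose ((k - x + m) / 2) : ℂ)
          else 0))
    (fun j hj => by
      by_cases h1 : n ≤ j ∧ (j + n) % 2 = 0
      · have h2 : ¬(m ≤ k - j ∧ (k - j + m) % 2 = 0) := by tauto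
        simp only [if_neg h2, mul_zero]
      · simp only [if_neg h1, zero_mul, mul_zero])]
  have heval : ∀ l ∈ Finset.range (q + 1),
      (k.choose (n + 2 * l) : ℂ) * (α₁ : ℂ) ^ (n + 2 * l) *
        ((if n ≤ n + 2 * l ∧ (n + 2 * l + n) % 2 = 0 then
            ((2 * Real.pi : ℝ) : ℂ) * ((n + 2 * l).choose ((n + 2 * l + n) / 2) : ℂ) else 0) *
          if m ≤ k - (n + 2 * l) ∧ (k - (n + 2 * l) + m) % 2 = 0 then
            ((2 * Real.pi : ℝ) : ℂ) * ((k - (n + 2 * l)).choose ((k - (n + 2 * l) + m) / 2) : ℂ)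
          else 0)
      = ((4 * Real.pi ^ 2 * (α₁ ^ (n + 2 * l) * (k.factorial : ℝ) /
          ((l.factorial : ℝ) * ((n + l).factorial : ℝ) * ((q - l).factorial : ℝ) *
            ((q - l + m).factorial : ℝ))) : ℝ) : ℂ) := by
    intro l hl
    have hl' : l ≤ q := by have := Finset.mem_range.mp hl; omega
    rw [if_pos ⟨by omega, by omega⟩, if_pos ⟨by omega, by omega⟩,
      show (n + 2 * l + n) / 2 = n + l from by omega,
      show k - (n + 2 * l) = m + 2 * (q - l) from by omega,
      show (m + 2 * (q - l) + m) / 2 = m + (q - l) from by omega]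
    have hreal : (k.choose (n + 2 * l) : ℝ) * α₁ ^ (n + 2 * l) *
        ((2 * Real.pi * (((n + 2 * l).choose (n + l) : ℕ) : ℝ)) *
         (2 * Real.pi * (((m + 2 * (q - l)).choose (m + (q - l)) : ℕ) : ℝ)))
        = 4 * Real.pi ^ 2 * (α₁ ^ (n + 2 * l) * (k.factorial : ℝ) /
          ((l.factorial : ℝ) * ((n + l).factorial : ℝ) * ((q - l).factorial : ℝ) *
            ((q - l + m).factorial : ℝ))) := by
      subst hk
      calc ((n + m + 2 * q).choose (n + 2 * l) : ℝ) * α₁ ^ (n + 2 * l) *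
            ((2 * Real.pi * (((n + 2 * l).choose (n + l) : ℕ) : ℝ)) *
             (2 * Real.pi * (((m + 2 * (q - l)).choose (m + (q - l)) : ℕ) : ℝ)))
          = 4 * Real.pi ^ 2 * α₁ ^ (n + 2 * l) *
            (((n + m + 2 * q).choose (n + 2 * l) : ℝ) * (((n + 2 * l).choose (n + l) : ℕ) : ℝ) *
              (((m + 2 * (q - l)).choose (m + (q - l)) : ℕ) : ℝ)) := by ring
        _ = _ := by rw [chooseProd n m q l hl']; ring
    rw [← hreal]
    push_cast
    ring
  rw [Finset.sum_congr rfl heval]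
  push_cast
  rw [← Finset.mul_sum]
  have hπC : (Real.pi : ℂ) ≠ 0 := Complex.ofReal_ne_zero.mpr hπ
  have hLC : ((2 + 2 * α₁ : ℝ) : ℂ) ≠ 0 := Complex.ofReal_ne_zero.mpr (ne_of_gt hL)
  field_simp
  congr 1
  exact Finset.sum_congr rfl fun x _ => by ring
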